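/- Let α ∈ (0, 1/3) and set the threshold θ = 2√2 − 5√2·α. Let S, S̄ be real-valued with S̄ a random variable on a probability space (Ω, P) and S a constant. Then: (i) if S ≤ 2√2 − 6√2·α, then P[S̄ ≥ θ] ≤ P[|S̄ − S| ≥ √2·α]; and (ii) if S ≥ 2√2 − 4√2·α, then P[S̄ < θ] ≤ P[|S̄ − S| ≥ √2·α]. Consequently, for a two-qubit density matrix ρ with CHSH value S = S(ρ) and fidelity F = F(ρ), the error probability of the verification test 'accept H₀ iff S̄ ≥ θ' satisfies P[S̄ ≥ θ and F ≤ 1−3α] + P[S̄ < θ and F ≥ 1−α] ≤ 2·P[|S̄ − S| ≥ √2·α]. -/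

import Mathlib

open Matrix Kronecker Complex ComplexOrder

noncomputable section

/-- Pauli X matrix. -/
def sigX : Matrix (Fin 2) (Fin 2) ℂ := !![0, 1; 1, 0]

/-- Pauli Z matrix. -/
def sigZ : Matrix (Fin 2) (Fin 2) ℂ := !![1, 0; 0, -1]

/-- Bob's observable `B₀ = (σx + σz)/√2`. -/
def Bob0 : Matrix (Fin 2) (Fin 2) ℂ := ((Real.sqrt 2 : ℂ))⁻¹ • (sigX + sigZ)

/-- Bob's observable `B₁ = (σx − σz)/√2`. -/
def Bob1 : Matrix (Fin 2) (Fin 2) ℂ := ((Real.sqrt 2 : ℂ))⁻¹ • (sigX - sigZ)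

/-- The CHSH operator `Ŝ = A₀⊗B₀ + A₁⊗B₀ + A₀⊗B₁ − A₁⊗B₁` with `A₀ = σx`, `A₁ = σz`. -/
def Shat : Matrix (Fin 2 × Fin 2) (Fin 2 × Fin 2) ℂ :=
  sigX ⊗ₖ Bob0 + sigZ ⊗ₖ Bob0 + sigX ⊗ₖ Bob1 - sigZ ⊗ₖ Bob1

/-- Bell state `|Φ⁺⟩ = (|00⟩ + |11⟩)/√2`. -/
def phiPlus : Fin 2 × Fin 2 → ℂ :=
  fun p => if p = (0, 0) ∨ p = (1, 1) then ((Real.sqrt 2 : ℂ))⁻¹ else 0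

/-- Bell state `|Ψ⁻⟩ = (|01⟩ − |10⟩)/√2`. -/
def psiMinus : Fin 2 × Fin 2 → ℂ :=
  fun p => if p = (0, 1) then ((Real.sqrt 2 : ℂ))⁻¹
    else if p = (1, 0) then -((Real.sqrt 2 : ℂ))⁻¹ else 0

/-- CHSH measure `S(ρ) = Tr(ρ Ŝ)` (a real number for Hermitian ρ). -/
def Smeas (ρ : Matrix (Fin 2 × Fin 2) (Fin 2 × Fin 2) ℂ) : ℝ :=
  ((ρ * Shat).trace).re

/-- Entanglement fidelity `F(ρ) = ⟨Φ⁺|ρ|Φ⁺⟩`. -/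
def Fent (ρ : Matrix (Fin 2 × Fin 2) (Fin 2 × Fin 2) ℂ) : ℝ :=
  (star phiPlus ⬝ᵥ ρ *ᵥ phiPlus).re

end

open MeasureTheory ProbabilityTheory Finset

noncomputable section

/-- Empirical mean `m(i,j) = (1/N) ∑ₖ X (i,j) k`. -/
def empMean {Ω : Type*} {N : ℕ} (X : Fin 2 × Fin 2 → Fin N → Ω → ℝ)
    (ij : Fin 2 × Fin 2) (ω : Ω) : ℝ :=
  (1 / N) * ∑ k, X ij k ω

/-- Empirical CHSH estimate `S̄ = m(0,0) + m(1,0) + m(0,1) − m(1,1)`. -/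
def SbarEmp {Ω : Type*} {N : ℕ} (X : Fin 2 × Fin 2 → Fin N → Ω → ℝ) (ω : Ω) : ℝ :=
  empMean X (0, 0) ω + empMean X (1, 0) ω + empMean X (0, 1) ω - empMean X (1, 1) ω

/-- True CHSH value `S = μ(0,0) + μ(1,0) + μ(0,1) − μ(1,1)`. -/
def Strue (μ : Fin 2 × Fin 2 → ℝ) : ℝ := μ (0, 0) + μ (1, 0) + μ (0, 1) - μ (1, 1)

end


noncomputable section CHSHAux

/-- Bell state `|Φ⁻⟩`. -/
def phiMinusV : Fin 2 × Fin 2 → ℂ :=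
  fun p => if p = (0, 0) then ((Real.sqrt 2 : ℂ))⁻¹
    else if p = (1, 1) then -((Real.sqrt 2 : ℂ))⁻¹ else 0

/-- Bell state `|Ψ⁺⟩`. -/
def psiPlusV : Fin 2 × Fin 2 → ℂ :=
  fun p => if p = (0, 1) ∨ p = (1, 0) then ((Real.sqrt 2 : ℂ))⁻¹ else 0

lemma h2C : (Real.sqrt 2 : ℂ) * (Real.sqrt 2 : ℂ) = 2 := by
  rw [← Complex.ofReal_mul, Real.mul_self_sqrt (by norm_num)]; norm_num

lemma trace_formula (ρ : Matrix (Fin 2 × Fin 2) (Fin 2 × Fin 2) ℂ) :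
    (ρ * Shat).trace = (Real.sqrt 2 : ℂ) *
      (ρ (0,0) (0,0) + ρ (1,1) (1,1) - ρ (0,1) (0,1) - ρ (1,0) (1,0)
        + ρ (0,0) (1,1) + ρ (1,1) (0,0) + ρ (0,1) (1,0) + ρ (1,0) (0,1)) := by
  have h2 := h2C
  simp only [Matrix.trace, Matrix.diag, Matrix.mul_apply, Fintype.sum_prod_type,
    Fin.sum_univ_two, Shat, Bob0, Bob1, sigX, sigZ, Matrix.add_apply, Matrix.sub_apply,
    Matrix.smul_apply, Matrix.kroneckerMap_apply, Matrix.cons_val', Matrix.cons_val_zero,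
    Matrix.cons_val_one, Matrix.head_cons, Matrix.head_fin_const, Matrix.empty_val',
    Matrix.cons_val_fin_one, smul_eq_mul, Matrix.of_apply]
  field_simp
  linear_combination -(ρ (0,0) (0,0) + ρ (1,1) (1,1) - ρ (0,1) (0,1) - ρ (1,0) (1,0) + ρ (0,0) (1,1) + ρ (1,1) (0,0) + ρ (0,1) (1,0) + ρ (1,0) (0,1)) * h2

lemma fent_formula (ρ : Matrix (Fin 2 × Fin 2) (Fin 2 × Fin 2) ℂ) :
    star phiPlus ⬝ᵥ ρ *ᵥ phiPlus =
      (ρ (0,0) (0,0) + ρ (0,0) (1,1) + ρ (1,1) (0,0) + ρ (1,1) (1,1)) / 2 := by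
  have h2 := h2C
  simp only [dotProduct, Matrix.mulVec, Fintype.sum_prod_type, Fin.sum_univ_two,
    phiPlus, Pi.star_apply, star_inv₀, Complex.star_def, Complex.conj_ofReal,
    star_zero]
  norm_num [Prod.ext_iff, Fin.ext_iff]
  field_simp
  linear_combination -(ρ (0,0) (0,0) + ρ (0,0) (1,1) + ρ (1,1) (0,0) + ρ (1,1) (1,1)) * h2

lemma gent_formula (ρ : Matrix (Fin 2 × Fin 2) (Fin 2 × Fin 2) ℂ) :
    star psiMinus ⬝ᵥ ρ *ᵥ psiMinus =
      (ρ (0,1) (0,1) - ρ (0,1) (1,0) - ρ (1,0) (0,1) + ρ (1,0) (1,0)) / 2 := by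
  have h2 := h2C
  simp only [dotProduct, Matrix.mulVec, Fintype.sum_prod_type, Fin.sum_univ_two,
    psiMinus, Pi.star_apply, star_inv₀, star_neg, Complex.star_def,
    Complex.conj_ofReal, star_zero]
  norm_num [Prod.ext_iff, Fin.ext_iff]
  field_simp
  linear_combination -(ρ (0,1) (0,1) - ρ (0,1) (1,0) - ρ (1,0) (0,1) + ρ (1,0) (1,0)) * h2

lemma fm_formula (ρ : Matrix (Fin 2 × Fin 2) (Fin 2 × Fin 2) ℂ) :
    star phiMinusV ⬝ᵥ ρ *ᵥ phiMinusV =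
      (ρ (0,0) (0,0) - ρ (0,0) (1,1) - ρ (1,1) (0,0) + ρ (1,1) (1,1)) / 2 := by
  have h2 := h2C
  simp only [dotProduct, Matrix.mulVec, Fintype.sum_prod_type, Fin.sum_univ_two,
    phiMinusV, Pi.star_apply, star_inv₀, star_neg, Complex.star_def,
    Complex.conj_ofReal, star_zero]
  norm_num [Prod.ext_iff, Fin.ext_iff]
  field_simp
  linear_combination -(ρ (0,0) (0,0) - ρ (0,0) (1,1) - ρ (1,1) (0,0) + ρ (1,1) (1,1)) * h2

lemma gp_formula (ρ : Matrix (Fin 2 × Fin 2) (Fin 2 × Fin 2) ℂ) :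
    star psiPlusV ⬝ᵥ ρ *ᵥ psiPlusV =
      (ρ (0,1) (0,1) + ρ (0,1) (1,0) + ρ (1,0) (0,1) + ρ (1,0) (1,0)) / 2 := by
  have h2 := h2C
  simp only [dotProduct, Matrix.mulVec, Fintype.sum_prod_type, Fin.sum_univ_two,
    psiPlusV, Pi.star_apply, star_inv₀, Complex.star_def,
    Complex.conj_ofReal, star_zero]
  norm_num [Prod.ext_iff, Fin.ext_iff]
  field_simp
  linear_combination -(ρ (0,1) (0,1) + ρ (0,1) (1,0) + ρ (1,0) (0,1) + ρ (1,0) (1,0)) * h2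

lemma psd_re_nonneg (ρ : Matrix (Fin 2 × Fin 2) (Fin 2 × Fin 2) ℂ) (h : ρ.PosSemidef)
    (v : Fin 2 × Fin 2 → ℂ) : 0 ≤ (star v ⬝ᵥ ρ *ᵥ v).re :=
  (Complex.le_def.mp (h.dotProduct_mulVec_nonneg v)).1

/-- Key quantum bounds: `S ≤ 2√2 F` and `4√2 F − 2√2 ≤ S`. -/
lemma quantum_bounds (ρ : Matrix (Fin 2 × Fin 2) (Fin 2 × Fin 2) ℂ)
    (hpsd : ρ.PosSemidef) (htr : ρ.trace = 1) :
    Smeas ρ ≤ 2 * Real.sqrt 2 * Fent ρ ∧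
      4 * Real.sqrt 2 * Fent ρ - 2 * Real.sqrt 2 ≤ Smeas ρ := by
  set F := Fent ρ with hFdef
  set G := (star psiMinus ⬝ᵥ ρ *ᵥ psiMinus).re with hGdef
  set FM := (star phiMinusV ⬝ᵥ ρ *ᵥ phiMinusV).re with hFMdef
  set GP := (star psiPlusV ⬝ᵥ ρ *ᵥ psiPlusV).re with hGPdef
  have hG0 : 0 ≤ G := psd_re_nonneg ρ hpsd _
  have hFM0 : 0 ≤ FM := psd_re_nonneg ρ hpsd _
  have hGP0 : 0 ≤ GP := psd_re_nonneg ρ hpsd _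
  have htr_re : (ρ (0,0) (0,0) + ρ (0,1) (0,1) + ρ (1,0) (1,0) + ρ (1,1) (1,1)).re = 1 := by
    have : ρ.trace = ρ (0,0) (0,0) + ρ (0,1) (0,1) + ρ (1,0) (1,0) + ρ (1,1) (1,1) := by
      simp [Matrix.trace, Matrix.diag, Fintype.sum_prod_type, Fin.sum_univ_two]; ring
    rw [← this, htr]; simp
  have hsum : F + G + FM + GP = 1 := by
    rw [hFdef, hGdef, hFMdef, hGPdef, Fent, fent_formula, gent_formula, fm_formula,
      gp_formula]
    simp only [Complex.div_re]
    simp only [Complex.add_re, Complex.sub_re, Prod.mk_zero_zero, Prod.mk_one_one] at htr_re ⊢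
    simp [Complex.normSq, Complex.add_im, Complex.sub_im]
    linarith [htr_re]
  have hS : Smeas ρ = 2 * Real.sqrt 2 * (F - G) := by
    rw [Smeas, trace_formula, hFdef, hGdef, Fent, fent_formula, gent_formula]
    rw [Complex.re_ofReal_mul]
    simp only [Complex.div_re]
    simp [Complex.add_re, Complex.sub_re]
    ring
  have hr : (0:ℝ) < Real.sqrt 2 := Real.sqrt_pos.mpr (by norm_num)
  constructor
  · rw [hS]; nlinarith
  · rw [hS]; nlinarith
end CHSHAux

/-- Error decomposition for the CHSH-based verification test with threshold
`θ = 2√2 − 5√2·α`: (i) if the true CHSH value `S` satisfies `S ≤ 2√2 − 6√2·α` then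
`P[S̄ ≥ θ] ≤ P[|S̄ − S| ≥ √2·α]`; (ii) if `S ≥ 2√2 − 4√2·α` then
`P[S̄ < θ] ≤ P[|S̄ − S| ≥ √2·α]`; and consequently, for a two-qubit density matrix ρ,
`P[S̄ ≥ θ ∧ F(ρ) ≤ 1−3α] + P[S̄ < θ ∧ F(ρ) ≥ 1−α] ≤ 2·P[|S̄ − S(ρ)| ≥ √2·α]`. -/



theorem verification_error_decomposition {Ω : Type*} [MeasurableSpace Ω]
    (P : MeasureTheory.Measure Ω) [MeasureTheory.IsProbabilityMeasure P]
    (Sb : Ω → ℝ) (hSb : Measurable Sb)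
    (α : ℝ) (hα : 0 < α) (hα' : α < 1 / 3) :
    (∀ S : ℝ,
      (S ≤ 2 * Real.sqrt 2 - 6 * Real.sqrt 2 * α →
        P {ω | Sb ω ≥ 2 * Real.sqrt 2 - 5 * Real.sqrt 2 * α} ≤
          P {ω | |Sb ω - S| ≥ Real.sqrt 2 * α}) ∧
      (S ≥ 2 * Real.sqrt 2 - 4 * Real.sqrt 2 * α →
        P {ω | Sb ω < 2 * Real.sqrt 2 - 5 * Real.sqrt 2 * α} ≤
          P {ω | |Sb ω - S| ≥ Real.sqrt 2 * α})) ∧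
    (∀ ρ : Matrix (Fin 2 × Fin 2) (Fin 2 × Fin 2) ℂ, ρ.PosSemidef → ρ.trace = 1 →
      P {ω | Sb ω ≥ 2 * Real.sqrt 2 - 5 * Real.sqrt 2 * α ∧ Fent ρ ≤ 1 - 3 * α} +
        P {ω | Sb ω < 2 * Real.sqrt 2 - 5 * Real.sqrt 2 * α ∧ Fent ρ ≥ 1 - α} ≤
          2 * P {ω | |Sb ω - Smeas ρ| ≥ Real.sqrt 2 * α}) := by
  have key : ∀ S : ℝ,
      (S ≤ 2 * Real.sqrt 2 - 6 * Real.sqrt 2 * α →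
        P {ω | Sb ω ≥ 2 * Real.sqrt 2 - 5 * Real.sqrt 2 * α} ≤
          P {ω | |Sb ω - S| ≥ Real.sqrt 2 * α}) ∧
      (S ≥ 2 * Real.sqrt 2 - 4 * Real.sqrt 2 * α →
        P {ω | Sb ω < 2 * Real.sqrt 2 - 5 * Real.sqrt 2 * α} ≤
          P {ω | |Sb ω - S| ≥ Real.sqrt 2 * α}) := by
    intro S
    constructor
    · intro hS
      apply measure_mono
      intro ω hω
      simp only [Set.mem_setOf_eq] at hω ⊢
      have h1 : Real.sqrt 2 * α ≤ Sb ω - S := by nlinarith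
      exact le_trans h1 (le_abs_self _)
    · intro hS
      apply measure_mono
      intro ω hω
      simp only [Set.mem_setOf_eq] at hω ⊢
      have h1 : Real.sqrt 2 * α ≤ S - Sb ω := by nlinarith
      calc Real.sqrt 2 * α ≤ S - Sb ω := h1
        _ = -(Sb ω - S) := by ring
        _ ≤ |Sb ω - S| := neg_le_abs _
  refine ⟨key, ?_⟩
  intro ρ hpsd htr
  have hdouble : ∀ x : ENNReal, x ≤ 2 * x := fun x => by
    rw [two_mul]; exact le_add_of_nonneg_right zero_le
  obtain ⟨hq1, hq2⟩ := quantum_bounds ρ hpsd htr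
  have hr : (0:ℝ) < Real.sqrt 2 := Real.sqrt_pos.mpr (by norm_num)
  by_cases hF : Fent ρ ≤ 1 - 3 * α
  · have hS : Smeas ρ ≤ 2 * Real.sqrt 2 - 6 * Real.sqrt 2 * α := by nlinarith
    have hF2 : ¬ (Fent ρ ≥ 1 - α) := by intro h; nlinarith
    have he : {ω | Sb ω < 2 * Real.sqrt 2 - 5 * Real.sqrt 2 * α ∧ Fent ρ ≥ 1 - α}
        = (∅ : Set Ω) := by ext ω; simp [hF2]
    have h1 : P {ω | Sb ω ≥ 2 * Real.sqrt 2 - 5 * Real.sqrt 2 * α ∧ Fent ρ ≤ 1 - 3 * α} ≤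
        P {ω | |Sb ω - Smeas ρ| ≥ Real.sqrt 2 * α} := by
      refine le_trans (measure_mono fun ω hω => hω.1) ((key (Smeas ρ)).1 hS)
    rw [he, measure_empty, add_zero]
    exact le_trans h1 (hdouble _)
  · push_neg at hF
    have he : {ω | Sb ω ≥ 2 * Real.sqrt 2 - 5 * Real.sqrt 2 * α ∧ Fent ρ ≤ 1 - 3 * α}
        = (∅ : Set Ω) := by ext ω; simp; intro _; linarith
    rw [he, measure_empty, zero_add]
    by_cases hF2 : Fent ρ ≥ 1 - α
    · have hS : Smeas ρ ≥ 2 * Real.sqrt 2 - 4 * Real.sqrt 2 * α := by nlinarith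
      have h2 := (key (Smeas ρ)).2 hS
      exact le_trans (measure_mono fun ω hω => hω.1) (le_trans h2 (hdouble _))
    · have he2 : {ω | Sb ω < 2 * Real.sqrt 2 - 5 * Real.sqrt 2 * α ∧ Fent ρ ≥ 1 - α}
          = (∅ : Set Ω) := by ext ω; simp [hF2]
      rw [he2, measure_empty]
      exact zero_le
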